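/- arXiv:1803.05093 — 2 statements merged into one kernel-verified Lean document; each statement's English description precedes it below -/
import Mathlib

section
/- Under the noise model, assume the induced subgraph G[S] contains at least one cycle. Let T be the spanning tree of G formed by all negative edges, let v₀ be the global f-minimum, and define Ĝ to be the subgraph of G consisting of, for each positive edge e = {u,w} of G with u, w ∈ S, the edge e together with all edges and vertices of the unique paths in T from u to v₀ and from w to v₀. Then Ĝ is a connected subgraph of the induced subgraph G[S], and its first Betti number |E(Ĝ)| − |V(Ĝ)| + 1 equals |E(G[S])| − |S| + 1, the first Betti number of G[S]. -/
open SimpleGraph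

/-- The function value of an edge: the larger of the values of its two endpoints. -/
noncomputable def fbar {V : Type*} (f : V → ℝ) : Sym2 V → ℝ :=
  Sym2.lift ⟨fun u w => max (f u) (f w), fun u w => max_comm (f u) (f w)⟩

/-- The spanning subgraph `G_{≺e}` of `G` whose edges are exactly the edges `e'` of `G`
with `e' ≺ e`. -/
def Gbelow {V : Type*} (G : SimpleGraph V) (lt : Sym2 V → Sym2 V → Prop) (e : Sym2 V) :
    SimpleGraph V :=
  SimpleGraph.fromEdgeSet {e' | e' ∈ G.edgeSet ∧ lt e' e}

/-- An edge `e` of `G` is negative if its two endpoints lie in different connected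
components of `G_{≺e}`. -/
def IsNegEdge {V : Type*} (G : SimpleGraph V) (lt : Sym2 V → Sym2 V → Prop) (e : Sym2 V) :
    Prop :=
  e ∈ G.edgeSet ∧ ∃ u w : V, e = s(u, w) ∧ ¬ (Gbelow G lt e).Reachable u w

/-- An edge `e` of `G` is positive if it is not negative. -/
def IsPosEdge {V : Type*} (G : SimpleGraph V) (lt : Sym2 V → Sym2 V → Prop) (e : Sym2 V) :
    Prop :=
  e ∈ G.edgeSet ∧ ¬ IsNegEdge G lt e

/-- The `f`-minimizing vertex of the connected component of `u` in the graph `H`. -/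
noncomputable def compMin {V : Type*} [Fintype V] (f : V → ℝ) (H : SimpleGraph V) (u : V) :
    V := by
  classical
  exact Classical.choose (Finset.exists_min_image
    (Finset.univ.filter fun v => H.Reachable u v) f
    ⟨u, Finset.mem_filter.mpr ⟨Finset.mem_univ u, SimpleGraph.Reachable.refl u⟩⟩)

/-- The vertex `m(e)` paired with a negative edge `e` by the elder rule: of the two
`f`-minimizing vertices of the components (in `G_{≺e}`) of the endpoints of `e`, the one
with the larger `f`-value. -/
noncomputable def pairVert {V : Type*} [Fintype V] (G : SimpleGraph V) (f : V → ℝ)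
    (hf : Function.Injective f) (lt : Sym2 V → Sym2 V → Prop) (e : Sym2 V) : V :=
  Sym2.lift ⟨fun u w =>
      if f (compMin f (Gbelow G lt e) u) < f (compMin f (Gbelow G lt e) w)
      then compMin f (Gbelow G lt e) w
      else compMin f (Gbelow G lt e) u, by
    intro u w
    dsimp only
    rcases lt_trichotomy (f (compMin f (Gbelow G lt e) u)) (f (compMin f (Gbelow G lt e) w))
      with h | h | h
    · rw [if_pos h, if_neg (lt_asymm h)]
    · rw [hf h]
    · rw [if_neg (lt_asymm h), if_pos h]⟩ e

/-- The persistence of a negative edge `e`: `f̄(e) - f(m(e))`. -/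
noncomputable def persE {V : Type*} [Fintype V] (G : SimpleGraph V) (f : V → ℝ)
    (hf : Function.Injective f) (lt : Sym2 V → Sym2 V → Prop) (e : Sym2 V) : ℝ :=
  fbar f e - f (pairVert G f hf lt e)

/-- `fbar` on an explicit pair. -/
lemma fbar_pair {V : Type*} (f : V → ℝ) (x y : V) : fbar f s(x, y) = max (f x) (f y) := rfl


/-- A maximal element of a nonempty finset w.r.t. a transitive total relation. -/
lemma my_exists_rel_max {α : Type*} (r : α → α → Prop) (E : Set α)
    (htrans : ∀ e₁ ∈ E, ∀ e₂ ∈ E, ∀ e₃ ∈ E, r e₁ e₂ → r e₂ e₃ → r e₁ e₃)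
    (htot : ∀ e₁ ∈ E, ∀ e₂ ∈ E, e₁ ≠ e₂ → r e₁ e₂ ∨ r e₂ e₁) :
    ∀ (s : Finset α), s.Nonempty → ↑s ⊆ E → ∃ e ∈ s, ∀ e' ∈ s, e' ≠ e → r e' e := by
  intro s hs
  induction hs using Finset.Nonempty.cons_induction with
  | singleton a => exact fun _ => ⟨a, Finset.mem_singleton_self a, by simp⟩
  | cons a s ha hs ih =>
    intro hsub
    have hsub' : ↑s ⊆ E := by
      refine subset_trans ?_ hsub
      intro x hx; simpa using Or.inr hx
    have haE : a ∈ E := hsub (by simp)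
    obtain ⟨e, he, hmax⟩ := ih hsub'
    have heE : e ∈ E := hsub' he
    have hane : a ≠ e := fun h => ha (h ▸ he)
    rcases htot a haE e heE hane with h | h
    · refine ⟨e, by simp [he], ?_⟩
      intro e' he' hne
      rcases Finset.mem_cons.mp he' with rfl | he'
      · exact h
      · exact hmax e' he' hne
    · refine ⟨a, by simp, ?_⟩
      intro e' he' hne
      rcases Finset.mem_cons.mp he' with rfl | he'
      · exact absurd rfl hne
      · rcases eq_or_ne e' e with rfl | hne'
        · exact h
        · exact htrans e' (hsub' he') e heE a haE (hmax e' he' hne') h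

section
variable {V : Type*} (G : SimpleGraph V) (lt : Sym2 V → Sym2 V → Prop)

lemma negEdge_mem_edgeSet {e : Sym2 V} (h : IsNegEdge G lt e) : e ∈ G.edgeSet := h.1

/-- The negative edges form an acyclic graph. -/
lemma negGraph_isAcyclic
    (hlt_trans : ∀ e₁ ∈ G.edgeSet, ∀ e₂ ∈ G.edgeSet, ∀ e₃ ∈ G.edgeSet,
      lt e₁ e₂ → lt e₂ e₃ → lt e₁ e₃)
    (hlt_total : ∀ e₁ ∈ G.edgeSet, ∀ e₂ ∈ G.edgeSet, e₁ ≠ e₂ → lt e₁ e₂ ∨ lt e₂ e₁) :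
    (SimpleGraph.fromEdgeSet {e | IsNegEdge G lt e}).IsAcyclic := by
  classical
  set T := SimpleGraph.fromEdgeSet {e | IsNegEdge G lt e} with hT
  intro v c hc
  have hedges_neg : ∀ e ∈ c.edges, IsNegEdge G lt e := by
    intro e he
    have := c.edges_subset_edgeSet he
    rw [hT, edgeSet_fromEdgeSet] at this
    exact this.1
  have hedges_ne : c.edges ≠ [] := by
    intro h
    have := hc.three_le_length
    rw [← SimpleGraph.Walk.length_edges, h] at this
    simp at this
  obtain ⟨e, he, hmax⟩ := my_exists_rel_max lt G.edgeSet hlt_trans hlt_total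
    c.edges.toFinset ⟨c.edges.head hedges_ne, List.mem_toFinset.mpr (List.head_mem hedges_ne)⟩
    (by intro x hx; simp only [List.coe_toFinset, Set.mem_setOf_eq, List.mem_toFinset] at hx ⊢
        exact (hedges_neg x hx).1)
  rw [List.mem_toFinset] at he
  have hneg := hedges_neg e he
  obtain ⟨heG, u, w, rfl, hnr⟩ := hneg
  -- the subgraph consisting of only the cycle's edges
  set H := SimpleGraph.fromEdgeSet {e' | e' ∈ c.edges} with hH
  have hce : ∀ e' ∈ c.edges, e' ∈ H.edgeSet := by
    intro e' he'
    rw [hH, edgeSet_fromEdgeSet]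
    exact ⟨he', G.not_isDiag_of_mem_edgeSet (hedges_neg e' he').1⟩
  have hc' : (c.transfer H hce).IsCycle := hc.transfer hce
  have he' : s(u, w) ∈ (c.transfer H hce).edges := by
    rw [SimpleGraph.Walk.edges_transfer]; exact he
  have hreach : (H \ SimpleGraph.fromEdgeSet {s(u, w)}).Reachable u w :=
    (SimpleGraph.adj_and_reachable_delete_edges_iff_exists_cycle.mpr ⟨v, _, hc', he'⟩).2
  apply hnr
  refine hreach.mono ?_
  intro x y hxy
  rw [sdiff_adj] at hxy
  obtain ⟨hxy1, hxy2⟩ := hxy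
  rw [hH, fromEdgeSet_adj] at hxy1
  obtain ⟨hmem, hne⟩ := hxy1
  have hnexy : s(x, y) ≠ s(u, w) := by
    intro h
    exact hxy2 (by rw [fromEdgeSet_adj]; exact ⟨by rw [h]; rfl, hne⟩)
  have hltxy : lt s(x, y) s(u, w) := by
    refine hmax _ (List.mem_toFinset.mpr hmem) hnexy
  rw [Gbelow, fromEdgeSet_adj]
  exact ⟨⟨(hedges_neg _ hmem).1, hltxy⟩, hne⟩

end

section
variable {V : Type*} [Fintype V] (G : SimpleGraph V) (lt : Sym2 V → Sym2 V → Prop)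

/-- Key reachability lemma: endpoints of edges in a downward-closed edge family `E`
are connected in any graph containing the negative edges of `E`. -/
lemma reach_of_negEdges
    (hlt_irrefl : ∀ e ∈ G.edgeSet, ¬ lt e e)
    (hlt_trans : ∀ e₁ ∈ G.edgeSet, ∀ e₂ ∈ G.edgeSet, ∀ e₃ ∈ G.edgeSet,
      lt e₁ e₂ → lt e₂ e₃ → lt e₁ e₃)
    (E : Set (Sym2 V)) (hE : E ⊆ G.edgeSet)
    (hclosed : ∀ e ∈ E, ∀ e' ∈ G.edgeSet, lt e' e → e' ∈ E)
    (T' : SimpleGraph V) (hT' : ∀ e ∈ E, IsNegEdge G lt e → e ∈ T'.edgeSet) :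
    ∀ e ∈ E, ∀ u w : V, e = s(u, w) → T'.Reachable u w := by
  classical
  have main : ∀ n : ℕ, ∀ e, {e' | e' ∈ G.edgeSet ∧ lt e' e}.ncard = n →
      e ∈ E → ∀ u w : V, e = s(u, w) → T'.Reachable u w := by
    intro n
    induction n using Nat.strong_induction_on with
    | _ n IH =>
      intro e hn heE u w hew
      by_cases hneg : IsNegEdge G lt e
      · have := hT' e heE hneg
        rw [hew, SimpleGraph.mem_edgeSet] at this
        exact this.reachable
      · have heG : e ∈ G.edgeSet := hE heE
        rw [IsNegEdge] at hneg
        push_neg at hneg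
        have hreach : (Gbelow G lt e).Reachable u w := hneg heG u w hew
        obtain ⟨p⟩ := hreach
        clear hneg hew
        -- induct along the walk p
        induction p with
        | nil => exact SimpleGraph.Reachable.refl _
        | @cons a b c hab q ihq =>
          have hab' := hab
          rw [Gbelow, SimpleGraph.fromEdgeSet_adj] at hab'
          obtain ⟨⟨habG, hablt⟩, habne⟩ := hab'
          have habE : s(a, b) ∈ E := hclosed e heE _ habG hablt
          have hlt_card : {e' | e' ∈ G.edgeSet ∧ lt e' s(a, b)}.ncard < n := by
            rw [← hn]
            apply Set.ncard_lt_ncard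
            · constructor
              · intro x hx
                exact ⟨hx.1, hlt_trans x hx.1 _ habG e heG hx.2 hablt⟩
              · intro hsub
                have : s(a, b) ∈ {e' | e' ∈ G.edgeSet ∧ lt e' e} := ⟨habG, hablt⟩
                exact hlt_irrefl _ habG (hsub this).2
            · exact Set.toFinite _
          have h1 : T'.Reachable a b := IH _ hlt_card s(a, b) rfl habE a b rfl
          exact h1.trans ihq
  intro e heE u w hew
  exact main _ e rfl heE u w hew

end

section
variable {V : Type*}

/-- Vertices of a walk ending in the support are in the support. -/
lemma my_walk_support_subset {K : SimpleGraph V} {u v : V} (p : K.Walk u v)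
    (hv : v ∈ K.support) : ∀ x ∈ p.support, x ∈ K.support := by
  induction p with
  | nil =>
    intro x hx
    simp only [SimpleGraph.Walk.support_nil, List.mem_singleton] at hx
    exact hx ▸ hv
  | @cons a b c hab q ih =>
    intro x hx
    simp only [SimpleGraph.Walk.support_cons, List.mem_cons] at hx
    rcases hx with rfl | hx
    · exact ⟨b, hab⟩
    · exact ih hv x hx
  
/-- A walk whose support lies in `A` yields reachability in the induced graph. -/
lemma my_reachable_induce {K : SimpleGraph V} {A : Set V} :
    ∀ {u v : V} (p : K.Walk u v) (h : ∀ x ∈ p.support, x ∈ A),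
    (K.induce A).Reachable ⟨u, h u p.start_mem_support⟩ ⟨v, h v p.end_mem_support⟩ := by
  intro u v p
  induction p with
  | nil => intro h; rfl
  | @cons a b c hab q ih =>
    intro h
    have hb : b ∈ A := h b (by simp)
    have hadj : (K.induce A).Adj ⟨a, h a (by simp)⟩ ⟨b, hb⟩ := by
      simpa using hab
    refine hadj.reachable.trans ?_
    have := ih (fun x hx => h x (by rw [SimpleGraph.Walk.support_cons]; exact List.mem_cons_of_mem _ hx))
    convert this using 2

/-- Counting edges of a finite "tree with root r": acyclic graph all of whose support
is connected to `r`. -/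
lemma my_tree_count [Fintype V] (K : SimpleGraph V) (hA : K.IsAcyclic) (r : V)
    (hr : r ∈ K.support) (hconn : ∀ u ∈ K.support, K.Reachable u r) :
    K.edgeSet.ncard + 1 = K.support.ncard := by
  classical
  set K' : SimpleGraph K.support := K.induce K.support with hK'
  have htree : K'.IsTree := by
    constructor
    · rw [SimpleGraph.connected_iff]
      constructor
      · intro a b
        have hra : K.Reachable ↑a r := hconn _ a.2
        have hrb : K.Reachable ↑b r := hconn _ b.2
        obtain ⟨p⟩ := hra.trans hrb.symm
        have hsupp : ∀ x ∈ p.support, x ∈ K.support :=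
          my_walk_support_subset p b.2
        have := my_reachable_induce p hsupp
        convert this using 2
      · exact ⟨⟨r, hr⟩⟩
    · intro a c hc
      have hc' : (c.map (SimpleGraph.Embedding.induce K.support).toHom).IsCycle :=
        hc.map Subtype.val_injective
      exact hA _ hc'
  haveI : Fintype K'.edgeSet := Fintype.ofFinite _
  have hcard := htree.card_edgeFinset
  have hV : Fintype.card K.support = K.support.ncard := by
    rw [← Nat.card_coe_set_eq, Nat.card_eq_fintype_card]
  have hedge : K'.edgeSet.ncard = K.edgeSet.ncard := by
    have himg : Sym2.map (Subtype.val : K.support → V) '' K'.edgeSet = K.edgeSet := by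
      ext e
      constructor
      · rintro ⟨e', he', rfl⟩
        induction e' using Sym2.ind with
        | _ a b =>
          rw [SimpleGraph.mem_edgeSet] at he'
          rw [Sym2.map_pair_eq, SimpleGraph.mem_edgeSet]
          exact he'
      · intro he
        induction e using Sym2.ind with
        | _ x y =>
          rw [SimpleGraph.mem_edgeSet] at he
          have hx : x ∈ K.support := ⟨y, he⟩
          have hy : y ∈ K.support := ⟨x, he.symm⟩
          refine ⟨s(⟨x, hx⟩, ⟨y, hy⟩), ?_, by rw [Sym2.map_pair_eq]⟩
          rw [SimpleGraph.mem_edgeSet]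
          exact he
    rw [← himg, Set.ncard_image_of_injective _ (Sym2.map.injective Subtype.val_injective)]
  rw [← hedge, ← hV, ← hcard]
  congr 1
  rw [Set.ncard_eq_toFinset_card', SimpleGraph.edgeFinset]
end

/-- Under the noise model, if `G[S]` contains a cycle, then the
reconstructed graph `Ĝ` (each positive edge in `S` together with the unique tree paths from
its endpoints to the global minimum `v₀`) is a connected subgraph of `G[S]`, and its first
Betti number equals that of `G[S]` (stated additively: `|E(Ĝ)| + |S| = |E(G[S])| + |V(Ĝ)|`).
-/
theorem reconstructed_graph_connected_same_betti {V : Type*} [Fintype V]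
    (G : SimpleGraph V) (f : V → ℝ) (hf : Function.Injective f)
    (lt : Sym2 V → Sym2 V → Prop)
    (hlt_irrefl : ∀ e ∈ G.edgeSet, ¬ lt e e)
    (hlt_trans : ∀ e₁ ∈ G.edgeSet, ∀ e₂ ∈ G.edgeSet, ∀ e₃ ∈ G.edgeSet,
      lt e₁ e₂ → lt e₂ e₃ → lt e₁ e₃)
    (hlt_total : ∀ e₁ ∈ G.edgeSet, ∀ e₂ ∈ G.edgeSet, e₁ ≠ e₂ → lt e₁ e₂ ∨ lt e₂ e₁)
    (hlt_refine : ∀ e₁ ∈ G.edgeSet, ∀ e₂ ∈ G.edgeSet, fbar f e₁ < fbar f e₂ → lt e₁ e₂)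
    (S : Set V) (β ν : ℝ) (hβν : 2 * ν < β) (hν : 0 ≤ ν)
    (hG : G.Connected) (hS : (G.induce S).Connected)
    (hfS : ∀ v ∈ S, f v ∈ Set.Icc (-β - ν) (-β))
    (hfSc : ∀ v : V, v ∉ S → f v ∈ Set.Icc (-ν) 0)
    (v₀ : V) (hv₀ : ∀ w : V, f v₀ ≤ f w)
    (hcyc : ¬ (G.induce S).IsAcyclic) :
    ∀ T : SimpleGraph V, T = SimpleGraph.fromEdgeSet {e | IsNegEdge G lt e} →
    ∀ Ghat : SimpleGraph V,
      Ghat = SimpleGraph.fromEdgeSet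
        ({e : Sym2 V | IsPosEdge G lt e ∧ ∀ v ∈ e, v ∈ S} ∪
         {e : Sym2 V | ∃ (e' : Sym2 V) (u w : V),
            IsPosEdge G lt e' ∧ (∀ v ∈ e', v ∈ S) ∧ e' = s(u, w) ∧
            ∃ p : T.Walk u v₀, p.IsPath ∧ e ∈ p.edges}) →
      Ghat ≤ G ∧
      (∀ e ∈ Ghat.edgeSet, ∀ v ∈ e, v ∈ S) ∧
      (∀ u ∈ Ghat.support, ∀ w ∈ Ghat.support, Ghat.Reachable u w) ∧
      Ghat.edgeSet.ncard + S.ncard =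
        {e : Sym2 V | e ∈ G.edgeSet ∧ ∀ v ∈ e, v ∈ S}.ncard + Ghat.support.ncard := by
  classical
  intro T hT Ghat hGhat
  set P : Set (Sym2 V) := {e : Sym2 V | IsPosEdge G lt e ∧ ∀ v ∈ e, v ∈ S} with hPdef
  set PathE : Set (Sym2 V) := {e : Sym2 V | ∃ (e' : Sym2 V) (u w : V),
      IsPosEdge G lt e' ∧ (∀ v ∈ e', v ∈ S) ∧ e' = s(u, w) ∧
      ∃ p : T.Walk u v₀, p.IsPath ∧ e ∈ p.edges} with hPathEdef
  set ES : Set (Sym2 V) := {e : Sym2 V | e ∈ G.edgeSet ∧ ∀ v ∈ e, v ∈ S} with hESdef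
  set NS : Set (Sym2 V) := {e : Sym2 V | IsNegEdge G lt e ∧ ∀ v ∈ e, v ∈ S} with hNSdef
  set TS : SimpleGraph V := SimpleGraph.fromEdgeSet NS with hTSdef
  -- basic numeric fact
  have hβν' : -β < -ν := by linarith
  -- fbar on S-internal vs other edges
  have hfbar_S : ∀ e ∈ ES, fbar f e ≤ -β := by
    intro e
    induction e using Sym2.ind with
    | _ x y =>
      intro he
      have hx := (hfS x (he.2 x (by simp))).2
      have hy := (hfS y (he.2 y (by simp))).2
      rw [fbar_pair]
      exact max_le hx hy
  have hfbar_nS : ∀ e ∈ G.edgeSet, ¬ (∀ v ∈ e, v ∈ S) → -ν ≤ fbar f e := by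
    intro e
    induction e using Sym2.ind with
    | _ x y =>
      intro he hns
      rw [fbar_pair]
      push_neg at hns
      obtain ⟨v, hv, hvS⟩ := hns
      have hb := (hfSc v hvS).1
      rcases Sym2.mem_iff.mp hv with rfl | rfl
      · exact le_trans hb (le_max_left _ _)
      · exact le_trans hb (le_max_right _ _)
  -- S-internal edges are downward closed
  have hclosedS : ∀ e ∈ ES, ∀ e' ∈ G.edgeSet, lt e' e → e' ∈ ES := by
    intro e he e' he' hlt'
    refine ⟨he', ?_⟩
    by_contra hns
    have h1 : fbar f e ≤ -β := hfbar_S e he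
    have h2 : -ν ≤ fbar f e' := hfbar_nS e' he' hns
    have h3 : lt e e' := hlt_refine e he.1 e' he' (by linarith)
    exact hlt_irrefl e' he' (hlt_trans e' he' e he.1 e' he' hlt' h3)
  -- the negative edge tree
  have hTacyc : T.IsAcyclic := by
    rw [hT]; exact negGraph_isAcyclic G lt hlt_trans hlt_total
  have hNS_G : NS ⊆ G.edgeSet := fun e he => he.1.1
  have hP_G : P ⊆ G.edgeSet := fun e he => he.1.1
  have hTSedge : TS.edgeSet = NS := by
    rw [hTSdef, SimpleGraph.edgeSet_fromEdgeSet]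
    ext e
    simp only [Set.mem_diff, Set.mem_setOf_eq, and_iff_left_iff_imp]
    intro he
    exact G.not_isDiag_of_mem_edgeSet (hNS_G he)
  have hTS_le_T : TS ≤ T := by
    rw [hTSdef, hT]
    exact SimpleGraph.fromEdgeSet_mono (fun e he => he.1)
  have hTSacyc : TS.IsAcyclic := fun v c hc => hTacyc _ (hc.mapLe hTS_le_T)
  -- reachability in TS for S-internal edges
  have hES_sub : ES ⊆ G.edgeSet := fun e he => he.1
  have hedgeTS : ∀ e ∈ ES, ∀ u w : V, e = s(u, w) → TS.Reachable u w := by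
    refine reach_of_negEdges G lt hlt_irrefl hlt_trans ES hES_sub hclosedS TS ?_
    intro e he hneg
    rw [hTSedge]
    exact ⟨hneg, he.2⟩
  -- reachability in TS between any two vertices of S
  have hreachS : ∀ u ∈ S, ∀ w ∈ S, TS.Reachable u w := by
    have key : ∀ {a b : S} (p : (G.induce S).Walk a b), TS.Reachable ↑a ↑b := by
      intro a b p
      induction p with
      | nil => exact SimpleGraph.Reachable.refl _
      | @cons a b c hab q ih =>
        have hadj : G.Adj ↑a ↑b := hab
        have hES' : s((a : V), (b : V)) ∈ ES := by
          refine ⟨(SimpleGraph.mem_edgeSet _).mpr hadj, ?_⟩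
          intro v hv
          rcases Sym2.mem_iff.mp hv with rfl | rfl
          · exact a.2
          · exact b.2
        exact (hedgeTS _ hES' _ _ rfl).trans ih
    intro u hu w hw
    obtain ⟨p⟩ := hS.preconnected ⟨u, hu⟩ ⟨w, hw⟩
    exact key p
  -- v₀ lies in S
  have hv₀S : v₀ ∈ S := by
    obtain ⟨s⟩ := hS.nonempty
    by_contra h
    have h1 := (hfSc v₀ h).1
    have h2 := (hfS (s : V) s.2).2
    have := hv₀ (s : V)
    linarith
  -- existence of a positive S-internal edge
  have hposE : ∃ x y : V, x ∈ S ∧ y ∈ S ∧ x ≠ y ∧ s(x, y) ∈ P := by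
    rw [SimpleGraph.IsAcyclic] at hcyc
    push_neg at hcyc
    obtain ⟨a, c, hc⟩ := hcyc
    have hc' : (c.map (SimpleGraph.Embedding.induce S).toHom).IsCycle :=
      hc.map Subtype.val_injective
    set c' := c.map (SimpleGraph.Embedding.induce S).toHom with hc'def
    have hc'S : ∀ e ∈ c'.edges, e ∈ ES := by
      intro e he
      refine ⟨c'.edges_subset_edgeSet he, ?_⟩
      rw [hc'def, SimpleGraph.Walk.edges_map] at he
      obtain ⟨e₀, _, rfl⟩ := List.mem_map.mp he
      induction e₀ using Sym2.ind with
      | _ a₁ a₂ =>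
        intro v hv
        rw [Sym2.map_pair_eq] at hv
        rcases Sym2.mem_iff.mp hv with rfl | rfl
        · exact a₁.2
        · exact a₂.2
    by_cases hall : ∀ e ∈ c'.edges, IsNegEdge G lt e
    · exfalso
      have htr : ∀ e ∈ c'.edges, e ∈ T.edgeSet := by
        intro e he
        rw [hT, SimpleGraph.edgeSet_fromEdgeSet]
        exact ⟨hall e he, G.not_isDiag_of_mem_edgeSet ((hc'S e he).1)⟩
      exact hTacyc _ (hc'.transfer htr)
    · push_neg at hall
      obtain ⟨e, he, hneg⟩ := hall
      have heES := hc'S e he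
      clear he
      revert heES hneg
      induction e using Sym2.ind with
      | _ x y =>
        intro hneg heES
        refine ⟨x, y, heES.2 x (by simp), heES.2 y (by simp), ?_, ⟨⟨heES.1, hneg⟩, heES.2⟩⟩
        intro h
        exact G.not_isDiag_of_mem_edgeSet heES.1 (by rw [h]; rfl)
  -- support of TS is S
  have hTSsupp : TS.support = S := by
    apply Set.Subset.antisymm
    · rintro u ⟨w, huw⟩
      change TS.Adj u w at huw
      rw [hTSdef, SimpleGraph.fromEdgeSet_adj] at huw
      exact huw.1.2 u (by simp)
    · intro u hu
      obtain ⟨x, y, hxS, hyS, hxy, _⟩ := hposE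
      obtain ⟨t, htS, htu⟩ : ∃ t, t ∈ S ∧ t ≠ u := by
        by_cases hux : u = x
        · exact ⟨y, hyS, fun h => hxy (hux.symm.trans h.symm)⟩
        · exact ⟨x, hxS, fun h => hux h.symm⟩
      obtain ⟨p⟩ := hreachS u hu t htS
      cases p with
      | nil => exact absurd rfl htu
      | cons h q => exact ⟨_, h⟩
  -- edge count of the negative spanning tree of S
  have hNScard : NS.ncard + 1 = S.ncard := by
    have := my_tree_count TS hTSacyc v₀ (by rw [hTSsupp]; exact hv₀S)
      (fun u hu => hreachS u (hTSsupp ▸ hu) v₀ hv₀S)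
    rwa [hTSedge, hTSsupp] at this
  -- edges on tree paths from S-vertices to v₀ are negative S-internal edges
  have hpath_edges : ∀ u : V, u ∈ S → ∀ p : T.Walk u v₀, p.IsPath →
      ∀ e ∈ p.edges, e ∈ NS := by
    intro u hu p hp
    obtain ⟨q0⟩ := hreachS u hu v₀ hv₀S
    set q : TS.Path u v₀ := q0.toPath with hq
    have hq' : (q.val.mapLe hTS_le_T).IsPath := q.prop.mapLe hTS_le_T
    have hpq : (⟨p, hp⟩ : T.Path u v₀) = ⟨q.val.mapLe hTS_le_T, hq'⟩ :=
      hTacyc.path_unique _ _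
    have hpe : p.edges = q.val.edges := by
      have h1 : p = q.val.mapLe hTS_le_T := congrArg Subtype.val hpq
      rw [h1, SimpleGraph.Walk.mapLe, SimpleGraph.Walk.edges_map]
      have : Sym2.map (SimpleGraph.Hom.ofLE hTS_le_T) = id := by
        have hid : ⇑(SimpleGraph.Hom.ofLE hTS_le_T) = id :=
          funext (SimpleGraph.Hom.ofLE_apply hTS_le_T)
        rw [hid, Sym2.map_id]
      rw [this, List.map_id]
    intro e he
    rw [hpe] at he
    have := q.val.edges_subset_edgeSet he
    rwa [hTSedge] at this
  have hPathE_NS : PathE ⊆ NS := by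
    rintro e ⟨e', u, w, hpos, hSint, heq, p, hp, hep⟩
    have huS : u ∈ S := hSint u (by rw [heq]; simp)
    exact hpath_edges u huS p hp e hep
  -- edge set of Ghat
  have hGhatEdge : Ghat.edgeSet = P ∪ PathE := by
    rw [hGhat, SimpleGraph.edgeSet_fromEdgeSet]
    ext e
    simp only [Set.mem_diff, Set.mem_union, Set.mem_setOf_eq, and_iff_left_iff_imp]
    intro he
    rcases he with he | he
    · exact G.not_isDiag_of_mem_edgeSet (hP_G he)
    · exact G.not_isDiag_of_mem_edgeSet (hNS_G (hPathE_NS he))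
  have hPdisj : Disjoint P PathE := by
    rw [Set.disjoint_left]
    intro e heP hePE
    exact heP.1.2 (hPathE_NS hePE).1
  -- part (a)
  have parta : Ghat ≤ G := by
    intro a b hab
    rw [hGhat, SimpleGraph.fromEdgeSet_adj] at hab
    rcases hab.1 with he | he
    · exact (SimpleGraph.mem_edgeSet _).mp (hP_G he)
    · exact (SimpleGraph.mem_edgeSet _).mp (hNS_G (hPathE_NS he))
  -- part (b)
  have partb : ∀ e ∈ Ghat.edgeSet, ∀ v ∈ e, v ∈ S := by
    intro e he
    rw [hGhatEdge] at he
    rcases he with he | he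
    · exact he.2
    · exact (hPathE_NS he).2
  -- the path tree K
  set K : SimpleGraph V := SimpleGraph.fromEdgeSet PathE with hKdef
  have hKedge : K.edgeSet = PathE := by
    rw [hKdef, SimpleGraph.edgeSet_fromEdgeSet]
    ext e
    simp only [Set.mem_diff, Set.mem_setOf_eq, and_iff_left_iff_imp]
    intro he
    exact G.not_isDiag_of_mem_edgeSet (hNS_G (hPathE_NS he))
  have hK_le_Ghat : K ≤ Ghat := by
    rw [hKdef, hGhat]
    exact SimpleGraph.fromEdgeSet_mono Set.subset_union_right
  have hK_le_TS : K ≤ TS := by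
    rw [hKdef, hTSdef]
    exact SimpleGraph.fromEdgeSet_mono hPathE_NS
  have hKacyc : K.IsAcyclic := fun v c hc => hTSacyc _ (hc.mapLe hK_le_TS)
  -- every vertex of K.support reaches v₀ in K
  have hKreach : ∀ u ∈ K.support, K.Reachable u v₀ := by
    rintro u ⟨b, hub⟩
    change K.Adj u b at hub
    rw [hKdef, SimpleGraph.fromEdgeSet_adj] at hub
    obtain ⟨⟨e', u', w', hpos, hSint, heq, p, hp, hep⟩, hne⟩ := hub
    have hall : ∀ e ∈ p.edges, e ∈ K.edgeSet := by
      intro e he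
      rw [hKedge]
      exact ⟨e', u', w', hpos, hSint, heq, p, hp, he⟩
    have hu_supp : u ∈ (p.transfer K hall).support := by
      rw [SimpleGraph.Walk.support_transfer]
      exact p.fst_mem_support_of_mem_edges hep
    exact ⟨(p.transfer K hall).dropUntil u hu_supp⟩
  -- existence of tree paths to v₀
  have hstep : ∀ u ∈ S, ∃ p : T.Walk u v₀, p.IsPath := by
    intro u hu
    obtain ⟨q⟩ := hreachS u hu v₀ hv₀S
    exact ⟨q.toPath.val.mapLe hTS_le_T, q.toPath.prop.mapLe hTS_le_T⟩
  -- endpoints of positive S-internal edges are in K.support, as is v₀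
  have hKsup : ∀ x y : V, s(x, y) ∈ P → x ≠ y → x ∈ K.support := by
    intro x y hxyP hne
    have hxS : x ∈ S := hxyP.2 x (by simp)
    have hyS : y ∈ S := hxyP.2 y (by simp)
    by_cases hxv : x = v₀
    · -- use the last edge of the path from y
      rw [hxv]
      have hyv : y ≠ v₀ := fun h => hne (hxv.trans h.symm)
      obtain ⟨p, hp⟩ := hstep y hyS
      have hnn : ¬ p.reverse.Nil := SimpleGraph.Walk.not_nil_of_ne (fun h => hyv h.symm)
      obtain ⟨b, hadj, q, hq⟩ := SimpleGraph.Walk.not_nil_iff.mp hnn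
      have hbe : s(v₀, b) ∈ p.edges := by
        have : s(v₀, b) ∈ p.reverse.edges := by
          rw [hq, SimpleGraph.Walk.edges_cons]
          exact List.mem_cons_self
        rwa [SimpleGraph.Walk.edges_reverse, List.mem_reverse] at this
      have hPE : s(v₀, b) ∈ PathE :=
        ⟨s(y, v₀), y, v₀, by rw [← hxv, Sym2.eq_swap]; exact hxyP.1,
          by rw [← hxv, Sym2.eq_swap]; exact hxyP.2, rfl, p, hp, hbe⟩
      exact ⟨b, by change K.Adj _ _; rw [hKdef, SimpleGraph.fromEdgeSet_adj]; exact ⟨hPE, hadj.ne⟩⟩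
    · obtain ⟨p, hp⟩ := hstep x hxS
      have hnn : ¬ p.Nil := SimpleGraph.Walk.not_nil_of_ne hxv
      obtain ⟨b, hadj, q, hq⟩ := SimpleGraph.Walk.not_nil_iff.mp hnn
      have hbe : s(x, b) ∈ p.edges := by
        rw [hq, SimpleGraph.Walk.edges_cons]
        exact List.mem_cons_self
      have hPE : s(x, b) ∈ PathE := ⟨s(x, y), x, y, hxyP.1, hxyP.2, rfl, p, hp, hbe⟩
      exact ⟨b, by change K.Adj _ _; rw [hKdef, SimpleGraph.fromEdgeSet_adj]; exact ⟨hPE, hadj.ne⟩⟩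
  -- K.support = Ghat.support
  have hsupp_eq : K.support = Ghat.support := by
    apply Set.Subset.antisymm (SimpleGraph.support_mono hK_le_Ghat)
    rintro u ⟨w, huw⟩
    have he : s(u, w) ∈ Ghat.edgeSet := (SimpleGraph.mem_edgeSet _).mpr huw
    rw [hGhatEdge] at he
    rcases he with he | he
    · exact hKsup u w he huw.ne
    · exact ⟨w, by change K.Adj _ _; rw [hKdef, SimpleGraph.fromEdgeSet_adj]; exact ⟨he, huw.ne⟩⟩
  have hv₀K : v₀ ∈ K.support := by
    obtain ⟨x, y, hxS, hyS, hxy, hxyP⟩ := hposE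
    by_cases hxv : x = v₀
    · exact hxv ▸ hKsup x y hxyP hxy
    · -- v₀ is the endpoint of the nontrivial path from x
      obtain ⟨p, hp⟩ := hstep x hxS
      have hnn : ¬ p.reverse.Nil := SimpleGraph.Walk.not_nil_of_ne (fun h => hxv h.symm)
      obtain ⟨b, hadj, q, hq⟩ := SimpleGraph.Walk.not_nil_iff.mp hnn
      have hbe : s(v₀, b) ∈ p.edges := by
        have : s(v₀, b) ∈ p.reverse.edges := by
          rw [hq, SimpleGraph.Walk.edges_cons]
          exact List.mem_cons_self
        rwa [SimpleGraph.Walk.edges_reverse, List.mem_reverse] at this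
      have hPE : s(v₀, b) ∈ PathE := ⟨s(x, y), x, y, hxyP.1, hxyP.2, rfl, p, hp, hbe⟩
      exact ⟨b, by change K.Adj _ _; rw [hKdef, SimpleGraph.fromEdgeSet_adj]; exact ⟨hPE, hadj.ne⟩⟩
  -- edge count of the path tree
  have hPathEcard : PathE.ncard + 1 = Ghat.support.ncard := by
    have := my_tree_count K hKacyc v₀ hv₀K hKreach
    rwa [hKedge, hsupp_eq] at this
  -- part (c)
  have partc : ∀ u ∈ Ghat.support, ∀ w ∈ Ghat.support, Ghat.Reachable u w := by
    intro u hu w hw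
    rw [← hsupp_eq] at hu hw
    exact ((hKreach u hu).trans (hKreach w hw).symm).mono hK_le_Ghat
  -- part (d)
  have hESsplit : ES = P ∪ NS := by
    ext e
    constructor
    · intro he
      by_cases hneg : IsNegEdge G lt e
      · exact Or.inr ⟨hneg, he.2⟩
      · exact Or.inl ⟨⟨he.1, hneg⟩, he.2⟩
    · rintro (he | he)
      · exact ⟨he.1.1, he.2⟩
      · exact ⟨he.1.1, he.2⟩
  have hPNdisj : Disjoint P NS := by
    rw [Set.disjoint_left]
    intro e heP heN
    exact heP.1.2 heN.1
  have hEScard : ES.ncard = P.ncard + NS.ncard := by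
    rw [hESsplit, Set.ncard_union_eq hPNdisj (Set.toFinite _) (Set.toFinite _)]
  have hGcard : Ghat.edgeSet.ncard = P.ncard + PathE.ncard := by
    rw [hGhatEdge, Set.ncard_union_eq hPdisj (Set.toFinite _) (Set.toFinite _)]
  refine ⟨parta, partb, partc, ?_⟩
  rw [hGcard, hEScard, ← hNScard, ← hPathEcard]
  omega
end

section
/- Let G be a finite simple graph, an edge of G being called a 'cycle edge' if some cycle of G traverses it, and let C be the set of cycle edges of G. Then a set H of edges of G satisfies 'deleting H eliminates no cycle' — i.e., every edge that lies on a cycle of G also lies on a cycle of the graph G − H obtained by deleting the edges of H — if and only if H ∩ C = ∅. Consequently E(G) \ C is the unique maximal such set H, and the resulting graph G − (E(G) \ C) is unique with edge set exactly C, and every edge of this graph lies on a cycle of this graph itself. -/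
open SimpleGraph

/-- An edge lies on a cycle of `G` if some cycle of `G` traverses it. -/
def OnCycle {V : Type*} (G : SimpleGraph V) (e : Sym2 V) : Prop :=
  ∃ (v : V) (c : G.Walk v v), c.IsCycle ∧ e ∈ c.edges

lemma onCycle_mem_edgeSet {V : Type*} {G : SimpleGraph V} {e : Sym2 V}
    (h : OnCycle G e) : e ∈ G.edgeSet := by
  obtain ⟨v, c, _, he⟩ := h
  exact c.edges_subset_edgeSet he

lemma onCycle_deleteEdges {V : Type*} {G : SimpleGraph V} {H : Set (Sym2 V)}
    (hH : H ∩ {e : Sym2 V | OnCycle G e} = ∅) {e : Sym2 V} (he : OnCycle G e) :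
    OnCycle (G.deleteEdges H) e := by
  obtain ⟨v, c, hc, hec⟩ := he
  have hdis : ∀ f ∈ c.edges, f ∉ H := by
    intro f hf hfH
    have : f ∈ H ∩ {e : Sym2 V | OnCycle G e} := ⟨hfH, ⟨v, c, hc, hf⟩⟩
    simp [hH] at this
  refine ⟨v, c.toDeleteEdges H hdis, ?_, ?_⟩
  · exact hc.transfer _
  · rwa [Walk.edges_transfer]

/-- For a set `H` of edges of `G`, deleting `H` eliminates no cycle iff `H`
is disjoint from the set `C` of cycle edges of `G`. Consequently `E(G) \ C` is the unique
maximal such set, the graph `G − (E(G) \ C)` has edge set exactly `C`, and every edge of this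
graph lies on a cycle of this graph itself. -/
theorem delete_edges_preserves_cycles_iff {V : Type*} [Fintype V] (G : SimpleGraph V) :
    (∀ H ⊆ G.edgeSet,
      ((∀ e : Sym2 V, OnCycle G e → OnCycle (G.deleteEdges H) e) ↔
        H ∩ {e : Sym2 V | OnCycle G e} = ∅)) ∧
    (∀ H ⊆ G.edgeSet,
      (∀ e : Sym2 V, OnCycle G e → OnCycle (G.deleteEdges H) e) →
        H ⊆ G.edgeSet \ {e : Sym2 V | OnCycle G e}) ∧
    (G.deleteEdges (G.edgeSet \ {e : Sym2 V | OnCycle G e})).edgeSet =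
      {e : Sym2 V | OnCycle G e} ∧
    (∀ e ∈ (G.deleteEdges (G.edgeSet \ {e : Sym2 V | OnCycle G e})).edgeSet,
      OnCycle (G.deleteEdges (G.edgeSet \ {e : Sym2 V | OnCycle G e})) e) := by
  have key : ∀ H : Set (Sym2 V),
      (∀ e : Sym2 V, OnCycle G e → OnCycle (G.deleteEdges H) e) ↔
        H ∩ {e : Sym2 V | OnCycle G e} = ∅ := by
    intro H
    constructor
    · intro hpres
      ext f
      simp only [Set.mem_inter_iff, Set.mem_setOf_eq, Set.mem_empty_iff_false, iff_false,
        not_and]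
      intro hfH hfC
      have := onCycle_mem_edgeSet (hpres f hfC)
      rw [edgeSet_deleteEdges] at this
      exact this.2 hfH
    · intro hH e he
      exact onCycle_deleteEdges hH he
  have hdisj : (G.edgeSet \ {e : Sym2 V | OnCycle G e}) ∩ {e : Sym2 V | OnCycle G e} = ∅ := by
    ext f; simp only [Set.mem_inter_iff, Set.mem_diff]; tauto
  have hedge : (G.deleteEdges (G.edgeSet \ {e : Sym2 V | OnCycle G e})).edgeSet =
      {e : Sym2 V | OnCycle G e} := by
    rw [edgeSet_deleteEdges]
    ext f
    simp only [Set.mem_diff, Set.mem_setOf_eq]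
    constructor
    · tauto
    · intro hf
      exact ⟨onCycle_mem_edgeSet hf, by tauto⟩
  refine ⟨fun H _ => key H, fun H hHE hpres f hfH => ?_, hedge, fun e he => ?_⟩
  · refine ⟨hHE hfH, fun hfC => ?_⟩
    have := ((key H).mp hpres)
    have : f ∈ H ∩ {e : Sym2 V | OnCycle G e} := ⟨hfH, hfC⟩
    rw [(key H).mp hpres] at this
    exact this
  · rw [hedge] at he
    exact onCycle_deleteEdges hdisj he
end
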